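/- Let W : ℝ → [0,∞) be continuous and satisfy hypotheses (w2)–(w4), let q* be the constant of the one-dimensional interpolation inequality, let 0 ≤ q < q*/4 and fix 0 < δ < 1. Then there exists a constant C₂ > 0 such that for every open interval I = (a,b) with ℒ¹(I) > 1 and every C² function v on [a,b] with v ≤ 0 on I, one has E(v; I) ≥ C₂ ‖v + 1‖²_{L∞(I)}. -/

import Mathlib

open MeasureTheory Real

set_option maxHeartbeats 1000000

/-- Hypotheses (w2)–(w4) for a continuous nonnegative potential,
together with the symmetry from (w1). -/
def WContSym (W : ℝ → ℝ) : Prop :=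
  Continuous W ∧ (∀ s, W s = W (-s)) ∧ (∀ s, 0 ≤ W s) ∧
  (∀ s, 0 ≤ s → s ≠ 1 → 0 < W s) ∧ W 1 = 0 ∧
  ∃ cW : ℝ, 0 < cW ∧ cW ≤ 1 ∧ ∀ s, 0 ≤ s → cW * |s - 1|^2 ≤ W s

/-- Rescaled energy `E(v; (a,b))`. -/
noncomputable def Eres (W : ℝ → ℝ) (q : ℝ) (v : ℝ → ℝ) (a b : ℝ) : ℝ :=
  ∫ x in a..b, (W (v x) - q * (deriv v x)^2 + (deriv (deriv v) x)^2)

lemma sumInterp (W : ℝ → ℝ) (hWc : Continuous W) (hWnn : ∀ s, 0 ≤ W s) (qs : ℝ) (hqs : 0 < qs)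
    (hinterp : ∀ a b : ℝ, a < b → ∀ u : ℝ → ℝ, ContDiff ℝ 2 u →
      qs * ∫ x in a..b, (deriv u x)^2 ≤
        (1 / (b - a)^2) * (∫ x in a..b, W (u x)) +
          (b - a)^2 * ∫ x in a..b, (deriv (deriv u) x)^2)
    (a b : ℝ) (hab : b - a > 1) (v : ℝ → ℝ) (hv : ContDiff ℝ 2 v) :
    qs * ∫ x in a..b, (deriv v x)^2 ≤
      (∫ x in a..b, W (v x)) + 4 * ∫ x in a..b, (deriv (deriv v) x)^2 := by
  have hvc : Continuous v := hv.continuous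
  have hvd : Continuous (deriv v) := hv.continuous_deriv (by norm_num)
  have hvdd : Continuous (deriv (deriv v)) := by
    have h2 : ContDiff ℝ (1+1) v := by norm_num; exact hv
    exact (contDiff_succ_iff_deriv.mp h2).2.2.continuous_deriv le_rfl
  have hWv : Continuous (fun x => W (v x)) := hWc.comp hvc
  set N := ⌊b - a⌋₊ with hNdef
  have hN1 : 1 ≤ N := Nat.le_floor (by push_cast; linarith)
  have hNpos : (0:ℝ) < N := by exact_mod_cast Nat.lt_of_lt_of_le Nat.zero_lt_one hN1
  set L := (b - a)/N with hLdef
  have hL1 : 1 ≤ L := by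
    rw [hLdef, le_div_iff₀ hNpos, one_mul]
    exact Nat.floor_le (by linarith)
  have hL2 : L ≤ 2 := by
    rw [hLdef, div_le_iff₀ hNpos]
    have h1 : b - a < N + 1 := Nat.lt_floor_add_one (b - a)
    have h2 : (1:ℝ) ≤ N := by exact_mod_cast hN1
    linarith
  have hL0 : 0 < L := by linarith
  set p : ℕ → ℝ := fun k => a + k * L with hpdef
  have hpk : ∀ k : ℕ, p (k+1) - p k = L := by intro k; simp only [hpdef]; push_cast; ring
  have hplt : ∀ k : ℕ, p k < p (k+1) := fun k => by nlinarith [hpk k]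
  have hp0 : p 0 = a := by simp [hpdef]
  have hpN : p N = b := by
    simp only [hpdef, hLdef]
    field_simp
    ring
  have step : ∀ k : ℕ, qs * ∫ x in p k..p (k+1), (deriv v x)^2 ≤
      (∫ x in p k..p (k+1), W (v x)) + 4 * ∫ x in p k..p (k+1), (deriv (deriv v) x)^2 := by
    intro k
    have h := hinterp (p k) (p (k+1)) (hplt k) v hv
    rw [hpk k] at h
    have hWint : 0 ≤ ∫ x in p k..p (k+1), W (v x) :=
      intervalIntegral.integral_nonneg (hplt k).le (fun u _ => hWnn _)
    have hddint : 0 ≤ ∫ x in p k..p (k+1), (deriv (deriv v) x)^2 :=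
      intervalIntegral.integral_nonneg (hplt k).le (fun u _ => sq_nonneg _)
    have e1 : (1/L^2) * ∫ x in p k..p (k+1), W (v x) ≤ ∫ x in p k..p (k+1), W (v x) := by
      have : 1/L^2 ≤ 1 := by
        rw [div_le_one (by positivity)]; nlinarith
      nlinarith
    have e2 : L^2 * ∫ x in p k..p (k+1), (deriv (deriv v) x)^2 ≤
        4 * ∫ x in p k..p (k+1), (deriv (deriv v) x)^2 := by
      have hL4 : L^2 ≤ 4 := by nlinarith
      nlinarith
    linarith
  have hi1 : ∀ k < N, IntervalIntegrable (fun x => (deriv v x)^2) volume (p k) (p (k+1)) :=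
    fun k _ => (hvd.pow 2).intervalIntegrable _ _
  have hi2 : ∀ k < N, IntervalIntegrable (fun x => W (v x)) volume (p k) (p (k+1)) :=
    fun k _ => hWv.intervalIntegrable _ _
  have hi3 : ∀ k < N, IntervalIntegrable (fun x => (deriv (deriv v) x)^2) volume (p k) (p (k+1)) :=
    fun k _ => (hvdd.pow 2).intervalIntegrable _ _
  have s1 := intervalIntegral.sum_integral_adjacent_intervals hi1
  have s2 := intervalIntegral.sum_integral_adjacent_intervals hi2
  have s3 := intervalIntegral.sum_integral_adjacent_intervals hi3
  rw [hp0, hpN] at s1 s2 s3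
  rw [← s1, ← s2, ← s3, Finset.mul_sum, Finset.mul_sum, ← Finset.sum_add_distrib]
  exact Finset.sum_le_sum (fun k _ => step k)

lemma ptSobolev (W : ℝ → ℝ) (hWc : Continuous W) (hWnn : ∀ s, 0 ≤ W s) (qs : ℝ) (hqs : 0 < qs)
    (cW : ℝ) (hcW0 : 0 < cW)
    (hinterp : ∀ a b : ℝ, a < b → ∀ u : ℝ → ℝ, ContDiff ℝ 2 u →
      qs * ∫ x in a..b, (deriv u x)^2 ≤
        (1 / (b - a)^2) * (∫ x in a..b, W (u x)) +
          (b - a)^2 * ∫ x in a..b, (deriv (deriv u) x)^2)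
    (a b : ℝ) (hab : b - a > 1) (v : ℝ → ℝ) (hv : ContDiff ℝ 2 v)
    (hWge : ∀ x ∈ Set.Icc a b, cW * (v x + 1)^2 ≤ W (v x))
    (x : ℝ) (hx : x ∈ Set.Ioo a b) :
    (v x + 1)^2 ≤ (2/cW + 1/qs) *
      ((∫ t in a..b, W (v t)) + ∫ t in a..b, (deriv (deriv v) t)^2) := by
  have hvc : Continuous v := hv.continuous
  have hvd : Continuous (deriv v) := hv.continuous_deriv (by norm_num)
  have hvdd : Continuous (deriv (deriv v)) := by
    have h2 : ContDiff ℝ (1+1) v := by norm_num; exact hv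
    exact (contDiff_succ_iff_deriv.mp h2).2.2.continuous_deriv le_rfl
  have hWv : Continuous (fun x => W (v x)) := hWc.comp hvc
  have hf : Continuous (fun t => (v t + 1)^2) := by continuity
  have hg : Continuous (fun t => 2*(v t + 1)*(deriv v t)) := by continuity
  have hh : Continuous (fun t => (v t + 1)^2 + (deriv v t)^2) := by continuity
  set c := min x (b - 1) with hc
  have hca : a ≤ c := le_min hx.1.le (by linarith)
  have hcb : c + 1 ≤ b := by
    have : c ≤ b - 1 := min_le_right _ _
    linarith
  have hxc : c ≤ x := min_le_left _ _
  have hxc1 : x ≤ c + 1 := by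
    rcases le_total x (b-1) with h | h
    · have : c = x := min_eq_left h; linarith
    · have : c = b - 1 := min_eq_right h; linarith [hx.2]
  -- min of (v+1)^2 on [c, c+1]
  obtain ⟨y, hy, hymin⟩ := (isCompact_Icc (a := c) (b := c+1)).exists_isMinOn
    ⟨c, Set.left_mem_Icc.mpr (by linarith)⟩ hf.continuousOn
  -- FTC
  have hderiv : ∀ t ∈ Set.uIcc y x, HasDerivAt (fun t => (v t + 1)^2)
      (2*(v t + 1)*(deriv v t)) t := by
    intro t _
    have h1 : HasDerivAt v (deriv v t) t :=
      ((hv.differentiable (by norm_num)) t).hasDerivAt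
    have h2 : HasDerivAt (fun s => v s + 1) (deriv v t) t := h1.add_const 1
    have : HasDerivAt (fun s => (v s + 1)^2) (((2:ℕ):ℝ) * (v t + 1) ^ (2 - 1) * deriv v t) t := h2.pow 2
    convert this using 1
    norm_num
  have hftc : (∫ t in y..x, 2*(v t + 1)*(deriv v t)) = (v x + 1)^2 - (v y + 1)^2 :=
    intervalIntegral.integral_eq_sub_of_hasDerivAt hderiv (hg.intervalIntegrable _ _)
  -- bound |∫_y^x g| by ∫_c^{c+1} (f² + f'²)
  have habs : ∀ u w : ℝ, u ∈ Set.Icc c (c+1) → w ∈ Set.Icc c (c+1) → u ≤ w →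
      |∫ t in u..w, 2*(v t + 1)*(deriv v t)| ≤
        ∫ t in c..(c+1), ((v t + 1)^2 + (deriv v t)^2) := by
    intro u w hu hw huw
    calc |∫ t in u..w, 2*(v t + 1)*(deriv v t)|
        ≤ ∫ t in u..w, |2*(v t + 1)*(deriv v t)| :=
          intervalIntegral.abs_integral_le_integral_abs huw
      _ ≤ ∫ t in u..w, ((v t + 1)^2 + (deriv v t)^2) := by
          apply intervalIntegral.integral_mono_on huw
            ((hg.abs).intervalIntegrable _ _) (hh.intervalIntegrable _ _)
          intro t _
          have h1 : |2*(v t + 1)*(deriv v t)| = 2 * |v t + 1| * |deriv v t| := by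
            rw [abs_mul, abs_mul]; simp [abs_of_nonneg]
          nlinarith [sq_nonneg (|v t + 1| - |deriv v t|), sq_abs (v t + 1),
            sq_abs (deriv v t), abs_nonneg (v t + 1), abs_nonneg (deriv v t)]
      _ ≤ ∫ t in c..(c+1), ((v t + 1)^2 + (deriv v t)^2) := by
          apply intervalIntegral.integral_mono_interval hu.1 huw hw.2
          · filter_upwards with t using by positivity
          · exact hh.intervalIntegrable _ _
  have hxIcc : x ∈ Set.Icc c (c+1) := ⟨hxc, hxc1⟩
  have key1 : (v x + 1)^2 ≤ (v y + 1)^2 + ∫ t in c..(c+1), ((v t + 1)^2 + (deriv v t)^2) := by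
    rcases le_total y x with h | h
    · have := habs y x hy hxIcc h
      rw [hftc] at this
      have := abs_le.mp this
      linarith [this.2]
    · have := habs x y hxIcc hy h
      rw [intervalIntegral.integral_symm, hftc] at this
      rw [abs_neg] at this
      have := abs_le.mp this
      linarith [this.2]
  -- (v y + 1)^2 ≤ ∫_c^{c+1} (v+1)^2
  have key2 : (v y + 1)^2 ≤ ∫ t in c..(c+1), (v t + 1)^2 := by
    have := intervalIntegral.integral_mono_on (by linarith : c ≤ c+1)
      (intervalIntegrable_const (μ := volume) (c := (v y + 1)^2)) (hf.intervalIntegrable _ _)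
      (fun t ht => hymin ht)
    simpa using this
  have hsplit : (∫ t in c..(c+1), ((v t + 1)^2 + (deriv v t)^2)) =
      (∫ t in c..(c+1), (v t + 1)^2) + ∫ t in c..(c+1), (deriv v t)^2 :=
    intervalIntegral.integral_add (hf.intervalIntegrable _ _) ((hvd.pow 2).intervalIntegrable _ _)
  -- interpolation on [c, c+1]
  have hint := hinterp c (c+1) (by linarith) v hv
  simp only [add_sub_cancel_left, one_pow, one_mul, one_div_one] at hint
  norm_num at hint
  -- ∫_J f² ≤ (1/cW) ∫_J W
  have key3 : cW * ∫ t in c..(c+1), (v t + 1)^2 ≤ ∫ t in c..(c+1), W (v t) := by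
    rw [← intervalIntegral.integral_const_mul]
    apply intervalIntegral.integral_mono_on (by linarith)
      ((continuous_const.mul hf).intervalIntegrable _ _) (hWv.intervalIntegrable _ _)
    intro t ht
    exact hWge t ⟨by linarith [ht.1], by linarith [ht.2]⟩
  -- monotonicity to [a,b]
  have hWnnI : (0:ℝ→ℝ) ≤ᶠ[ae (volume.restrict (Set.Ioc a b))] fun t => W (v t) := by
    filter_upwards with t using hWnn _
  have hddnnI : (0:ℝ→ℝ) ≤ᶠ[ae (volume.restrict (Set.Ioc a b))]
      fun t => (deriv (deriv v) t)^2 := by filter_upwards with t using sq_nonneg _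
  have mono1 : (∫ t in c..(c+1), W (v t)) ≤ ∫ t in a..b, W (v t) :=
    intervalIntegral.integral_mono_interval hca (by linarith) hcb hWnnI
      (hWv.intervalIntegrable _ _)
  have mono2 : (∫ t in c..(c+1), (deriv (deriv v) t)^2) ≤ ∫ t in a..b, (deriv (deriv v) t)^2 :=
    intervalIntegral.integral_mono_interval hca (by linarith) hcb hddnnI
      ((hvdd.pow 2).intervalIntegrable _ _)
  -- combine
  have hIW0 : 0 ≤ ∫ t in a..b, W (v t) :=
    intervalIntegral.integral_nonneg (by linarith) (fun t _ => hWnn _)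
  have hIdd0 : 0 ≤ ∫ t in a..b, (deriv (deriv v) t)^2 :=
    intervalIntegral.integral_nonneg (by linarith) (fun t _ => sq_nonneg _)
  have hJdd0 : 0 ≤ ∫ t in c..(c+1), (deriv (deriv v) t)^2 :=
    intervalIntegral.integral_nonneg (by linarith) (fun t _ => sq_nonneg _)
  have hJW0 : 0 ≤ ∫ t in c..(c+1), W (v t) :=
    intervalIntegral.integral_nonneg (by linarith) (fun t _ => hWnn _)
  -- f x² ≤ 2∫f² + ∫v'² ≤ (2/cW)∫W_J + (1/qs)(∫W_J + ∫dd_J)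
  have hf2 : (∫ t in c..(c+1), (v t + 1)^2) ≤ (1/cW) * ∫ t in c..(c+1), W (v t) := by
    have h := mul_le_mul_of_nonneg_left key3 (by positivity : (0:ℝ) ≤ 1/cW)
    calc (∫ t in c..(c+1), (v t + 1)^2)
        = 1/cW * (cW * ∫ t in c..(c+1), (v t + 1)^2) := by field_simp
      _ ≤ 1/cW * ∫ t in c..(c+1), W (v t) := h
  have hd2 : (∫ t in c..(c+1), (deriv v t)^2) ≤
      (1/qs) * ((∫ t in c..(c+1), W (v t)) + ∫ t in c..(c+1), (deriv (deriv v) t)^2) := by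
    have h := mul_le_mul_of_nonneg_left hint (by positivity : (0:ℝ) ≤ 1/qs)
    calc (∫ t in c..(c+1), (deriv v t)^2)
        = 1/qs * (qs * ∫ t in c..(c+1), (deriv v t)^2) := by field_simp
      _ ≤ 1/qs * ((∫ t in c..(c+1), W (v t)) + ∫ t in c..(c+1), (deriv (deriv v) t)^2) := h
  have final : (v x + 1)^2 ≤
      (2/cW) * (∫ t in c..(c+1), W (v t)) +
      (1/qs) * ((∫ t in c..(c+1), W (v t)) + ∫ t in c..(c+1), (deriv (deriv v) t)^2) := by
    have h2cW : (2/cW) * (∫ t in c..(c+1), W (v t)) = 2 * ((1/cW) * ∫ t in c..(c+1), W (v t)) := by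
      ring
    linarith [key1, key2, hsplit, hf2, hd2]
  have hKpos : (0:ℝ) < 2/cW + 1/qs := by positivity
  calc (v x + 1)^2 ≤ (2/cW) * (∫ t in c..(c+1), W (v t)) +
      (1/qs) * ((∫ t in c..(c+1), W (v t)) + ∫ t in c..(c+1), (deriv (deriv v) t)^2) := final
    _ ≤ (2/cW + 1/qs) * ((∫ t in a..b, W (v t)) + ∫ t in a..b, (deriv (deriv v) t)^2) := by
        have h1 : (0:ℝ) < 2/cW := by positivity
        have h2 : (0:ℝ) < 1/qs := by positivity
        have m1 := mul_le_mul_of_nonneg_left mono1 h1.le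
        have m2 := mul_le_mul_of_nonneg_left mono1 h2.le
        have m3 := mul_le_mul_of_nonneg_left mono2 h2.le
        have m4 : 0 ≤ (2/cW) * ∫ t in a..b, (deriv (deriv v) t)^2 :=
          mul_nonneg h1.le hIdd0
        nlinarith [m1, m2, m3, m4]

theorem stmt14 (W : ℝ → ℝ) (hW : WContSym W) (qs : ℝ) (hqs : 0 < qs)
    -- qs is the constant of the one-dimensional interpolation inequality
    (hinterp : ∀ a b : ℝ, a < b → ∀ u : ℝ → ℝ, ContDiff ℝ 2 u →
      qs * ∫ x in a..b, (deriv u x)^2 ≤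
        (1 / (b - a)^2) * (∫ x in a..b, W (u x)) +
          (b - a)^2 * ∫ x in a..b, (deriv (deriv u) x)^2)
    (q : ℝ) (hq0 : 0 ≤ q) (hq : q < qs / 4)
    (δ : ℝ) (hδ0 : 0 < δ) (hδ1 : δ < 1) :
    ∃ C₂ > (0:ℝ), ∀ a b : ℝ, b - a > 1 →
      ∀ v : ℝ → ℝ, ContDiff ℝ 2 v → (∀ x ∈ Set.Ioo a b, v x ≤ 0) →
        C₂ * (sSup ((fun x => |v x + 1|) '' Set.Ioo a b))^2 ≤ Eres W q v a b := by
  obtain ⟨hWc, hWsym, hWnn, -, -, cW, hcW0, hcW1, hcWle⟩ := hW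
  set ε := 1 - 4*q/qs with hεdef
  have hε0 : 0 < ε := by
    have : 4*q/qs < 1 := by rw [div_lt_one hqs]; linarith
    simp only [hεdef]; linarith
  set K := 2/cW + 1/qs with hKdef
  have hK0 : 0 < K := by positivity
  refine ⟨ε / K, by positivity, ?_⟩
  intro a b hab v hv hvle
  have hab' : a < b := by linarith
  have hvc : Continuous v := hv.continuous
  have hvd : Continuous (deriv v) := hv.continuous_deriv (by norm_num)
  have hvdd : Continuous (deriv (deriv v)) := by
    have h2 : ContDiff ℝ (1+1) v := by norm_num; exact hv
    exact (contDiff_succ_iff_deriv.mp h2).2.2.continuous_deriv le_rfl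
  have hWv : Continuous (fun x => W (v x)) := hWc.comp hvc
  -- v ≤ 0 on Icc a b
  have hvle' : ∀ x ∈ Set.Icc a b, v x ≤ 0 := by
    have hsub : Set.Icc a b ⊆ closure (Set.Ioo a b) := by
      rw [closure_Ioo hab'.ne]
    intro x hx
    have hcl : IsClosed {x | v x ≤ 0} := isClosed_le hvc continuous_const
    exact hcl.closure_subset_iff.mpr (fun y hy => hvle y hy) (hsub hx)
  -- potential bound
  have hWge : ∀ x ∈ Set.Icc a b, cW * (v x + 1)^2 ≤ W (v x) := by
    intro x hx
    have h0 : 0 ≤ -v x := by linarith [hvle' x hx]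
    have h1 := hcWle (-v x) h0
    rw [hWsym (v x)]
    calc cW * (v x + 1)^2 = cW * |(-v x) - 1|^2 := by rw [sq_abs]; ring_nf
      _ ≤ W (-v x) := h1
  -- energy decomposition
  have hiW : IntervalIntegrable (fun x => W (v x)) volume a b := hWv.intervalIntegrable a b
  have hid : IntervalIntegrable (fun x => q * (deriv v x)^2) volume a b :=
    (continuous_const.mul (hvd.pow 2)).intervalIntegrable a b
  have hidd : IntervalIntegrable (fun x => (deriv (deriv v) x)^2) volume a b :=
    (hvdd.pow 2).intervalIntegrable a b
  have hE : Eres W q v a b = (∫ x in a..b, W (v x)) - q * (∫ x in a..b, (deriv v x)^2)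
      + ∫ x in a..b, (deriv (deriv v) x)^2 := by
    unfold Eres
    rw [intervalIntegral.integral_add (hiW.sub hid) hidd,
      intervalIntegral.integral_sub hiW hid, intervalIntegral.integral_const_mul]
  set IW := ∫ x in a..b, W (v x) with hIWdef
  set Idd := ∫ x in a..b, (deriv (deriv v) x)^2 with hIdddef
  have hIW0 : 0 ≤ IW := intervalIntegral.integral_nonneg hab'.le (fun t _ => hWnn _)
  have hIdd0 : 0 ≤ Idd := intervalIntegral.integral_nonneg hab'.le (fun t _ => sq_nonneg _)
  have key := sumInterp W hWc hWnn qs hqs hinterp a b hab v hv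
  -- Eres ≥ ε * (IW + Idd)
  have hEge : ε * (IW + Idd) ≤ Eres W q v a b := by
    rw [hE]
    have hε' : ε = 1 - 4*(q/qs) := by rw [hεdef]; ring
    rw [hε']
    have hqdiv : 0 ≤ q/qs := div_nonneg hq0 hqs.le
    have h4 : q * (∫ x in a..b, (deriv v x)^2) ≤ (q/qs) * (IW + 4 * Idd) := by
      have h := mul_le_mul_of_nonneg_left key hqdiv
      calc q * (∫ x in a..b, (deriv v x)^2)
          = (q/qs) * (qs * ∫ x in a..b, (deriv v x)^2) := by field_simp
        _ ≤ (q/qs) * (IW + 4 * Idd) := h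
    nlinarith [mul_nonneg hqdiv hIW0, h4]
  have hE0 : 0 ≤ Eres W q v a b := le_trans (by positivity) hEge
  -- pointwise bound
  have hpt : ∀ x ∈ Set.Ioo a b, (v x + 1)^2 ≤ K * (IW + Idd) := fun x hx =>
    ptSobolev W hWc hWnn qs hqs cW hcW0 hinterp a b hab v hv hWge x hx
  -- conclude via sSup
  set S := sSup ((fun x => |v x + 1|) '' Set.Ioo a b) with hSdef
  have hS0 : 0 ≤ S := Real.sSup_nonneg (by rintro r ⟨t, -, rfl⟩; exact abs_nonneg _)
  set B := Real.sqrt (K * (IW + Idd)) with hBdef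
  have hSB : S ≤ B := by
    apply Real.sSup_le _ (Real.sqrt_nonneg _)
    rintro r ⟨t, ht, rfl⟩
    have h1 := hpt t ht
    show |v t + 1| ≤ Real.sqrt (K * (IW + Idd))
    rw [(Real.sqrt_sq_eq_abs (v t + 1)).symm]
    exact Real.sqrt_le_sqrt h1
  have hS2 : S^2 ≤ K * (IW + Idd) := by
    have h1 : S^2 ≤ B^2 := pow_le_pow_left₀ hS0 hSB 2
    have h2 : B^2 = K * (IW + Idd) := Real.sq_sqrt (by positivity)
    linarith
  calc ε / K * S^2 ≤ ε / K * (K * (IW + Idd)) :=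
        mul_le_mul_of_nonneg_left hS2 (by positivity)
    _ = ε * (IW + Idd) := by field_simp
    _ ≤ Eres W q v a b := hEge
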